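/- For all reals ε > 0, α > 1, ℓ > 0, and a, b ∈ (0, 1) satisfying a ≥ e^{−ε}·b^{α/(α−1)} (equivalently a^{1−α}·b^{α} ≤ e^{ε(α−1)}), it holds that (α − 1)·e^{−ε(1+ℓ)}·b − α·a ≤ e^{−ε(1+αℓ)}. -/

import Mathlib

open Real

/-- Key estimate inside the proof of Lemma `rdp-to-conv-ratio` (via weighted AM–GM):
for `ε > 0`, `α > 1`, `ℓ > 0`, and `a, b ∈ (0, 1)` with `a ≥ e^(-ε) b^(α/(α-1))`,
we have `(α - 1) e^(-ε(1+ℓ)) b - α a ≤ e^(-ε(1+αℓ))`. -/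
theorem rdp_to_conv_ratio_linear
    (ε α ℓ a b : ℝ) (hε : 0 < ε) (hα : 1 < α) (hℓ : 0 < ℓ)
    (ha : a ∈ Set.Ioo (0:ℝ) 1) (hb : b ∈ Set.Ioo (0:ℝ) 1)
    (h : Real.exp (-ε) * b ^ (α / (α - 1)) ≤ a) :
    (α - 1) * Real.exp (-ε * (1 + ℓ)) * b - α * a ≤ Real.exp (-ε * (1 + α * ℓ)) := by
  obtain ⟨hb0, hb1⟩ := hb
  have hα1 : (0:ℝ) < α - 1 := by linarith
  have hα0 : (0:ℝ) < α := by linarith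
  have hpq : Real.HolderConjugate α (α / (α - 1)) := Real.HolderConjugate.conjExponent hα
  have young := Real.young_inequality_of_nonneg (le_of_lt (Real.exp_pos (-(ε * ℓ))))
    (le_of_lt hb0) hpq
  rw [Real.rpow_def_of_pos (Real.exp_pos _), Real.log_exp] at young
  set B : ℝ := b ^ (α / (α - 1)) with hB
  have hBnn : 0 ≤ B := Real.rpow_nonneg hb0.le _
  -- young : exp(-(ε*ℓ)) * b ≤ exp(-(ε*ℓ)*α)/α + B/(α/(α-1))
  have hdiv : B / (α / (α - 1)) = B * (α - 1) / α := by
    field_simp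
  rw [hdiv] at young
  have e1 : Real.exp (-ε * (1 + ℓ)) = Real.exp (-ε) * Real.exp (-(ε * ℓ)) := by
    rw [← Real.exp_add]; ring_nf
  have e2 : Real.exp (-ε * (1 + α * ℓ)) = Real.exp (-ε) * Real.exp (-(ε * ℓ) * α) := by
    rw [← Real.exp_add]; ring_nf
  rw [e1, e2]
  set E := Real.exp (-ε) with hE
  set X := Real.exp (-(ε * ℓ)) with hX
  set Y := Real.exp (-(ε * ℓ) * α) with hY
  have hEpos : 0 < E := Real.exp_pos _
  have hXpos : 0 < X := Real.exp_pos _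
  have hYpos : 0 < Y := Real.exp_pos _
  -- young : X * b ≤ Y / α + B * (α - 1) / α
  have young' : α * (X * b) ≤ Y + B * (α - 1) := by
    have := mul_le_mul_of_nonneg_left young hα0.le
    rw [mul_add, mul_div_cancel₀ _ (ne_of_gt hα0), mul_div_cancel₀ _ (ne_of_gt hα0)] at this
    linarith
  have hkey : (α - 1) * (X * b) ≤ Y + (α - 1) * B := by
    nlinarith [mul_pos hXpos hb0, mul_nonneg hBnn hα1.le]
  -- a ≥ E * B
  nlinarith [mul_le_mul_of_nonneg_left h (le_of_lt hEpos),
    mul_le_mul_of_nonneg_left hkey hEpos.le, mul_nonneg hEpos.le hBnn]
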